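/- Let f be an odd positive integer, D a discriminant, and Q a primitive integral binary quadratic form of discriminant Df². Then there exist a primitive form q of discriminant D and a matrix U ∈ SL₂(ℤ) such that Q = q · (R_f U), where R_f = [[1,0],[0,f]]. -/

import Mathlib

/-- An integral binary quadratic form ax² + bxy + cy². -/
structure BQF where
  a : ℤ
  b : ℤ
  c : ℤ

namespace BQF

/-- Value of the form at (x, y). -/
def eval (q : BQF) (x y : ℤ) : ℤ := q.a * x ^ 2 + q.b * x * y + q.c * y ^ 2

/-- Discriminant b² - 4ac. -/
def disc (q : BQF) : ℤ := q.b ^ 2 - 4 * q.a * q.c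

/-- A form is primitive if gcd(a, b, c) = 1. -/
def IsPrimitive (q : BQF) : Prop := Int.gcd (Int.gcd q.a q.b) q.c = 1

/-- Right action: (q·M)(x,y) = q(px + ry, sx + ty) for M = [[p,r],[s,t]]. -/
def act (q : BQF) (M : Matrix (Fin 2) (Fin 2) ℤ) : BQF :=
  ⟨q.eval (M 0 0) (M 1 0),
   q.eval (M 0 0 + M 0 1) (M 1 0 + M 1 1) - q.eval (M 0 0) (M 1 0) - q.eval (M 0 1) (M 1 1),
   q.eval (M 0 1) (M 1 1)⟩

/-- Proper equivalence: equivalence under the SL₂(ℤ) action. -/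
def ProperEquiv (q q' : BQF) : Prop :=
  ∃ U : Matrix.SpecialLinearGroup (Fin 2) ℤ, q.act U.1 = q'

end BQF

/-- R_g = [[f,g],[0,1]] for g < f, and R_f = [[1,0],[0,f]] when g = f. -/
def Rmat (f g : ℤ) : Matrix (Fin 2) (Fin 2) ℤ :=
  if g = f then !![1, 0; 0, f] else !![f, g; 0, 1]

/-- A discriminant: a non-square integer congruent to 0 or 1 mod 4. -/
def IsDiscriminant (D : ℤ) : Prop := ¬ IsSquare D ∧ (D % 4 = 0 ∨ D % 4 = 1)

/-- A fundamental discriminant. -/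
def IsFundamental (D : ℤ) : Prop :=
  (D % 4 = 1 ∧ Squarefree D) ∨
  (D % 4 = 0 ∧ Squarefree (D / 4) ∧ (D / 4 % 4 = 2 ∨ D / 4 % 4 = 3))

namespace BQF
theorem act_mul (q : BQF) (M N : Matrix (Fin 2) (Fin 2) ℤ) :
    (q.act M).act N = q.act (M * N) := by
  simp only [act, eval, Matrix.mul_apply, Fin.sum_univ_two, BQF.mk.injEq]
  refine ⟨by ring, by ring, by ring⟩
theorem act_one (q : BQF) : q.act 1 = q := by
  cases q
  simp [act, eval, Matrix.one_apply, BQF.mk.injEq]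
  ring
theorem disc_act (q : BQF) (M : Matrix (Fin 2) (Fin 2) ℤ) :
    (q.act M).disc = q.disc * (M.det)^2 := by
  simp only [act, eval, disc, Matrix.det_fin_two]
  ring
theorem act_shear (q : BQF) (t : ℤ) :
    q.act !![1, t; 0, 1] = ⟨q.a, q.b + 2*q.a*t, q.a*t^2 + q.b*t + q.c⟩ := by
  simp only [act, eval, BQF.mk.injEq, Matrix.of_apply, Matrix.cons_val', Matrix.cons_val_zero,
    Matrix.cons_val_one, Matrix.head_cons, Matrix.head_fin_const, Matrix.empty_val',
    Matrix.cons_val_fin_one]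
  refine ⟨by ring, by ring, by ring⟩
theorem act_Rf (q : BQF) (f : ℤ) :
    q.act !![1, 0; 0, f] = ⟨q.a, q.b * f, q.c * f^2⟩ := by
  simp only [act, eval, BQF.mk.injEq, Matrix.of_apply, Matrix.cons_val', Matrix.cons_val_zero,
    Matrix.cons_val_one, Matrix.head_cons, Matrix.head_fin_const, Matrix.empty_val',
    Matrix.cons_val_fin_one]
  refine ⟨by ring, by ring, by ring⟩
theorem gcd_dvd_eval (q : BQF) (d x y : ℤ) (ha : d ∣ q.a) (hb : d ∣ q.b) (hc : d ∣ q.c) :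
    d ∣ q.eval x y := by
  unfold eval
  exact dvd_add (dvd_add (ha.mul_right _) (by rw [mul_assoc]; exact hb.mul_right _)) (hc.mul_right _)
theorem primitive_of_act (q : BQF) (M N : Matrix (Fin 2) (Fin 2) ℤ) (hMN : M * N = 1)
    (h : q.IsPrimitive) : (q.act M).IsPrimitive := by
  set r := q.act M with hr
  set d : ℤ := (Int.gcd (Int.gcd r.a r.b) r.c : ℤ) with hd
  have hda : d ∣ r.a := dvd_trans (Int.gcd_dvd_left _ _) (Int.gcd_dvd_left _ _)
  have hdb : d ∣ r.b := dvd_trans (Int.gcd_dvd_left _ _) (Int.gcd_dvd_right _ _)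
  have hdc : d ∣ r.c := Int.gcd_dvd_right _ _
  have hback : r.act N = q := by rw [act_mul, hMN, act_one]
  have h1 : d ∣ q.a := by
    rw [← hback]; exact gcd_dvd_eval r d _ _ hda hdb hdc
  have h3 : d ∣ q.c := by
    rw [← hback]; exact gcd_dvd_eval r d _ _ hda hdb hdc
  have h2 : d ∣ q.b := by
    rw [← hback]
    exact dvd_sub (dvd_sub (gcd_dvd_eval r d _ _ hda hdb hdc) (gcd_dvd_eval r d _ _ hda hdb hdc))
      (gcd_dvd_eval r d _ _ hda hdb hdc)
  have : d ∣ (1:ℤ) := by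
    have := Int.dvd_coe_gcd (Int.dvd_coe_gcd h1 h2) h3
    rwa [h] at this
  have h1d := Int.eq_one_of_dvd_one (by positivity) this
  rw [hd] at h1d
  exact_mod_cast h1d
end BQF

lemma combine_lemma (a b c P m x1 x2 u w : ℤ) (hu : u*P + w*m = 1)
    (h1 : IsCoprime (a*x1^2+b*x1+c) P) (h2 : IsCoprime (a*x2^2+b*x2+c) m) :
    ∃ x : ℤ, IsCoprime (a*x^2+b*x+c) (P*m) := by
  set x : ℤ := x2*u*P + x1*w*m with hxdef
  refine ⟨x, IsCoprime.mul_right ?_ ?_⟩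
  · have hx : a*x^2+b*x+c = (a*x1^2+b*x1+c) + P * ((x2-x1)*u*(a*(x+x1)+b)) := by
      rw [hxdef]; linear_combination (a*((x2*u*P + x1*w*m)+x1)+b)*x1*hu
    rw [hx]; exact h1.add_mul_left_left _
  · have hx : a*x^2+b*x+c = (a*x2^2+b*x2+c) + m * ((x1-x2)*w*(a*(x+x2)+b)) := by
      rw [hxdef]; linear_combination (a*((x2*u*P + x1*w*m)+x2)+b)*x2*hu
    rw [hx]; exact h2.add_mul_left_left _

lemma prime_case (a b c : ℤ) (h : Int.gcd (Int.gcd a b) c = 1) (p : ℕ) (hp : p.Prime)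
    (hpodd : Odd p) : ∃ x : ℤ, ¬ (p:ℤ) ∣ (a*x^2+b*x+c) := by
  by_contra hcon
  push_neg at hcon
  have h0 := hcon 0
  have h1 := hcon 1
  have h2 := hcon (-1)
  have hpz : Prime (p:ℤ) := Nat.prime_iff_prime_int.mp hp
  have hnd2 : ¬ (p:ℤ) ∣ 2 := by
    intro hd
    have hd' : p ∣ 2 := by exact_mod_cast hd
    have := (Nat.prime_dvd_prime_iff_eq hp Nat.prime_two).mp hd'
    obtain ⟨j, hj⟩ := hpodd
    omega
  have hda2 : (p:ℤ) ∣ 2*a := by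
    have : (2:ℤ)*a = (a*1^2+b*1+c) + (a*(-1)^2+b*(-1)+c) - 2*(a*0^2+b*0+c) := by ring
    rw [this]; exact dvd_sub (dvd_add h1 h2) (Dvd.dvd.mul_left h0 2)
  have hdb2 : (p:ℤ) ∣ 2*b := by
    have : (2:ℤ)*b = (a*1^2+b*1+c) - (a*(-1)^2+b*(-1)+c) := by ring
    rw [this]; exact dvd_sub h1 h2
  have hda : (p:ℤ) ∣ a := ((hpz.dvd_mul.mp hda2).resolve_left hnd2)
  have hdb : (p:ℤ) ∣ b := ((hpz.dvd_mul.mp hdb2).resolve_left hnd2)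
  have hdc : (p:ℤ) ∣ c := by simpa using h0
  have : (p:ℤ) ∣ (1:ℤ) := by
    have := Int.dvd_coe_gcd (Int.dvd_coe_gcd hda hdb) hdc
    rwa [h] at this
  exact hpz.not_dvd_one this

lemma exists_coprime_val_nat (a b c : ℤ) (h : Int.gcd (Int.gcd a b) c = 1) :
    ∀ n : ℕ, Odd n → ∃ x : ℤ, IsCoprime (a*x^2+b*x+c) (n:ℤ) := by
  intro n
  induction n using Nat.strong_induction_on with
  | _ n ih =>
    intro hodd
    rcases Nat.lt_or_ge n 2 with hn | hn
    · interval_cases n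
      · exact absurd hodd (by simp)
      · exact ⟨0, by simpa using isCoprime_one_right⟩
    · have hn0 : n ≠ 0 := by omega
      set p := n.minFac with hpdef
      have hp : p.Prime := Nat.minFac_prime (by omega)
      have hpn : p ∣ n := Nat.minFac_dvd n
      have hpodd : Odd p := by
        rcases Nat.Prime.eq_two_or_odd' hp with h2 | h
        · exfalso; rw [h2] at hpn
          exact (Nat.not_odd_iff_even.mpr (even_iff_two_dvd.mpr hpn)) hodd
        · exact h
      set k := n.factorization p with hkdef
      set m := n / p ^ k with hmdef
      have hPm : p ^ k * m = n := Nat.ordProj_mul_ordCompl_eq_self n p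
      have hpm : ¬ p ∣ m := Nat.not_dvd_ordCompl hp hn0
      have hk : 0 < k := hp.factorization_pos_of_dvd hn0 hpn
      have hP1 : 1 < p ^ k := Nat.one_lt_pow hk.ne' hp.one_lt
      have hmlt : m < n := Nat.div_lt_self (by omega) hP1
      have hmodd : Odd m := by
        rcases Nat.even_or_odd m with he | ho
        · exfalso
          have : Even n := by
            rw [← hPm]; exact he.mul_left _
          exact (Nat.not_odd_iff_even.mpr this) hodd
        · exact ho
      obtain ⟨x2, h2⟩ := ih m hmlt hmodd
      obtain ⟨x1, hx1⟩ := prime_case a b c h p hp hpodd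
      have hpz : Prime (p:ℤ) := Nat.prime_iff_prime_int.mp hp
      have h1 : IsCoprime (a*x1^2+b*x1+c) ((p:ℤ)^k) :=
        (((hpz.coprime_iff_not_dvd).mpr hx1).symm).pow_right
      have hcop : Nat.Coprime (p^k) m :=
        Nat.Coprime.pow_left k ((Nat.Prime.coprime_iff_not_dvd hp).mpr hpm)
      have hcopz : IsCoprime ((p:ℤ)^k) (m:ℤ) := by
        have := Nat.isCoprime_iff_coprime.mpr hcop
        push_cast at this
        exact this
      obtain ⟨u, w, hu⟩ := hcopz
      obtain ⟨x, hx⟩ := combine_lemma a b c ((p:ℤ)^k) (m:ℤ) x1 x2 u w hu h1 h2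
      refine ⟨x, ?_⟩
      have : ((p:ℤ)^k) * (m:ℤ) = (n:ℤ) := by exact_mod_cast congrArg (Nat.cast : ℕ → ℤ) hPm
      rwa [this] at hx

lemma exists_coprime_val (a b c : ℤ) (h : Int.gcd (Int.gcd a b) c = 1)
    (f : ℤ) (hf : 0 < f) (hodd : Odd f) : ∃ x : ℤ, IsCoprime (a*x^2+b*x+c) f := by
  obtain ⟨x, hx⟩ := exists_coprime_val_nat a b c h f.natAbs (Int.natAbs_odd.mpr hodd)
  rw [Int.natAbs_of_nonneg hf.le] at hx
  exact ⟨x, hx⟩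


theorem stmt9 (f : ℤ) (hf : 0 < f) (hodd : Odd f) (D : ℤ)
    (hD : IsDiscriminant D) (Q : BQF) (hQ : Q.IsPrimitive) (hQd : Q.disc = D * f ^ 2) :
    ∃ q : BQF, ∃ U : Matrix.SpecialLinearGroup (Fin 2) ℤ,
      q.IsPrimitive ∧ q.disc = D ∧ Q = q.act (Rmat f f * U.1) := by
  obtain ⟨x, hx⟩ := exists_coprime_val Q.a Q.b Q.c hQ f hf hodd
  have hco2 : IsCoprime (2:ℤ) f := by
    obtain ⟨j, hj⟩ := hodd; exact ⟨-j, 1, by rw [hj]; ring⟩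
  set V : Matrix.SpecialLinearGroup (Fin 2) ℤ :=
    ⟨!![x, -1; 1, 0], by simp [Matrix.det_fin_two_of]⟩ with hV
  have hP1a : (Q.act V.1).a = Q.a*x^2 + Q.b*x + Q.c := by
    simp [hV, BQF.act, BQF.eval]
  have hA : IsCoprime (Q.act V.1).a f := by rw [hP1a]; exact hx
  obtain ⟨A, hAdef⟩ : ∃ A, A = (Q.act V.1).a := ⟨_, rfl⟩
  obtain ⟨B0, hB0def⟩ : ∃ B0, B0 = (Q.act V.1).b := ⟨_, rfl⟩
  obtain ⟨C0, hC0def⟩ : ∃ C0, C0 = (Q.act V.1).c := ⟨_, rfl⟩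
  rw [← hAdef] at hA
  have h2A : IsCoprime (2*A) f := hco2.mul_left hA
  have h4A : IsCoprime (4*A) f := by
    have := hco2.mul_left h2A
    rwa [show (2:ℤ)*(2*A) = 4*A from by ring] at this
  obtain ⟨u, w, huw⟩ := h2A
  obtain ⟨t, htdef⟩ : ∃ t : ℤ, t = -(B0 * u) := ⟨_, rfl⟩
  set S : Matrix.SpecialLinearGroup (Fin 2) ℤ :=
    ⟨!![1, t; 0, 1], by simp [Matrix.det_fin_two_of]⟩ with hS
  set W := V * S with hW
  obtain ⟨B, hBdef⟩ : ∃ B, B = B0 + 2*A*t := ⟨_, rfl⟩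
  obtain ⟨C, hCdef⟩ : ∃ C, C = A*t^2 + B0*t + C0 := ⟨_, rfl⟩
  have hQV : Q.act V.1 = ⟨A, B0, C0⟩ := by rw [hAdef, hB0def, hC0def]
  have hQW : Q.act W.1 = ⟨A, B, C⟩ := by
    rw [hW, Matrix.SpecialLinearGroup.coe_mul, ← BQF.act_mul, hQV]
    have hS1 : S.1 = !![1, t; 0, 1] := by rw [hS]
    rw [hS1, BQF.act_shear]
    rw [hBdef, hCdef]
  have hWinv : W.1 * (W⁻¹).1 = 1 := by
    rw [← Matrix.SpecialLinearGroup.coe_mul, mul_inv_cancel]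
    rfl
  have hfB : f ∣ B := by
    refine ⟨B0 * w, ?_⟩
    rw [hBdef, htdef]
    linear_combination (-B0) * huw
  obtain ⟨b1, hb1⟩ := hfB
  have hdisc : B^2 - 4*A*C = D * f^2 := by
    have h := BQF.disc_act Q W.1
    rw [hQW, W.2, hQd] at h
    simpa [BQF.disc] using h
  have h4AC : f^2 ∣ 4*A*C := by
    refine ⟨b1^2 - D, ?_⟩
    linear_combination (-1)*hdisc + (B + f*b1)*hb1
  have hcof : IsCoprime (f^2) (4*A) := (h4A.symm).pow_left
  have hf2C : f^2 ∣ C := by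
    apply hcof.dvd_of_dvd_mul_left
    rwa [show (4*A)*C = 4*A*C from by ring]
  obtain ⟨c1, hc1⟩ := hf2C
  have hfne : (f:ℤ) ≠ 0 := hf.ne'
  refine ⟨⟨A, b1, c1⟩, W⁻¹, ?_, ?_, ?_⟩
  · -- primitivity
    have hPprim : (Q.act W.1).IsPrimitive :=
      BQF.primitive_of_act Q W.1 (W⁻¹).1 hWinv hQ
    rw [hQW] at hPprim
    unfold BQF.IsPrimitive at hPprim ⊢
    simp only at hPprim ⊢
    have hda : ((Int.gcd (Int.gcd A b1) c1 : ℕ) : ℤ) ∣ A :=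
      dvd_trans (Int.gcd_dvd_left _ _) (Int.gcd_dvd_left _ _)
    have hdb : ((Int.gcd (Int.gcd A b1) c1 : ℕ) : ℤ) ∣ b1 :=
      dvd_trans (Int.gcd_dvd_left _ _) (Int.gcd_dvd_right _ _)
    have hdc : ((Int.gcd (Int.gcd A b1) c1 : ℕ) : ℤ) ∣ c1 := Int.gcd_dvd_right _ _
    have hdB : ((Int.gcd (Int.gcd A b1) c1 : ℕ) : ℤ) ∣ B := by rw [hb1]; exact hdb.mul_left f
    have hdC : ((Int.gcd (Int.gcd A b1) c1 : ℕ) : ℤ) ∣ C := by rw [hc1]; exact hdc.mul_left (f^2)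
    have hd1 : ((Int.gcd (Int.gcd A b1) c1 : ℕ) : ℤ) ∣ (1:ℤ) := by
      have h' := Int.dvd_coe_gcd (Int.dvd_coe_gcd hda hdB) hdC
      rwa [hPprim] at h'
    have h1d := Int.eq_one_of_dvd_one (by positivity) hd1
    exact_mod_cast h1d
  · -- disc
    show b1^2 - 4*A*c1 = D
    have key : f^2*(b1^2 - 4*A*c1) = f^2*D := by
      linear_combination hdisc - (B + f*b1)*hb1 + 4*A*hc1
    exact mul_left_cancel₀ (pow_ne_zero 2 hfne) key
  · -- equality
    have hR : Rmat f f = !![1, 0; 0, f] := if_pos rfl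
    have hqR : (BQF.mk A b1 c1).act (Rmat f f) = ⟨A, B, C⟩ := by
      rw [hR, BQF.act_Rf, BQF.mk.injEq]
      exact ⟨rfl, by rw [hb1]; ring, by rw [hc1]; ring⟩
    rw [← BQF.act_mul, hqR, ← hQW, BQF.act_mul, hWinv, BQF.act_one]
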